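/- In the contact-functional setting, assuming additionally that j_τ(x,·) satisfies j_τ⁰(x, ξ₁; ξ₂ − ξ₁) + j_τ⁰(x, ξ₂; ξ₁ − ξ₂) ≤ α_τ ‖ξ₁ − ξ₂‖² for all ξ₁, ξ₂ ∈ ℝ^d and a.e. x (with α_τ ≥ 0), the functional J(w,v) = ∫_{Γ_C} j(x, w(x), v(x)) dμ on X = L²(μ; ℝ^d) satisfies J₂⁰(w₁, v₁; v₂ − v₁) + J₂⁰(w₂, v₂; v₁ − v₂) ≤ ḡ_τ α_τ ‖v₁ − v₂‖_X² + (L_{g_ν} + L_{g_τ} c_τ) ‖w₁ − w₂‖_X ‖v₁ − v₂‖_X for all w₁, w₂, v₁, v₂ ∈ X, i.e. J satisfies H(J)(c) with m_{J1} = ḡ_τ α_τ and m_{J2} = L_{g_ν} + L_{g_τ} c_τ. -/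

import Mathlib

open Filter MeasureTheory

/-- Clarke generalized directional derivative. -/
noncomputable def clarkeDeriv {Y : Type*} [NormedAddCommGroup Y] [NormedSpace ℝ Y]
    (φ : Y → ℝ) (y z : Y) : ℝ :=
  Filter.limsup (fun p : Y × ℝ => (φ (p.1 + p.2 • z) - φ p.1) / p.2)
    ((nhds y) ×ˢ (nhdsWithin 0 (Set.Ioi 0)))

/-- Clarke subdifferential. -/
def clarkeSubdiff {Y : Type*} [NormedAddCommGroup Y] [NormedSpace ℝ Y]
    (φ : Y → ℝ) (y : Y) : Set (Y →L[ℝ] ℝ) :=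
  {ξ | ∀ z, ξ z ≤ clarkeDeriv φ y z}

/-- The contact integrand `j(x, η, ξ) = g_ν(x, η_ν) ξ_ν + g_τ(x, η_ν) j_τ(x, ξ_τ)`,
where `η_ν = η·ν(x)` and `η_τ = η − η_ν ν(x)`. -/
noncomputable def jfun {Ω : Type*} {d : ℕ}
    (ν : Ω → EuclideanSpace ℝ (Fin d)) (gν gτ : Ω → ℝ → ℝ)
    (jτ : Ω → EuclideanSpace ℝ (Fin d) → ℝ)
    (x : Ω) (η ξ : EuclideanSpace ℝ (Fin d)) : ℝ :=
  gν x (inner ℝ η (ν x)) * (inner ℝ ξ (ν x) : ℝ) +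
    gτ x (inner ℝ η (ν x)) * jτ x (ξ - (inner ℝ ξ (ν x) : ℝ) • ν x)

/-- The contact functional `J(w, v) = ∫_{Γ_C} j(x, w(x), v(x)) dμ` on `X = L²(μ; ℝ^d)`. -/
noncomputable def Jfun {Ω : Type*} [MeasurableSpace Ω] {d : ℕ} (μ : Measure Ω)
    (ν : Ω → EuclideanSpace ℝ (Fin d)) (gν gτ : Ω → ℝ → ℝ)
    (jτ : Ω → EuclideanSpace ℝ (Fin d) → ℝ)
    (w v : Lp (EuclideanSpace ℝ (Fin d)) 2 μ) : ℝ :=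
  ∫ x, jfun ν gν gτ jτ x (w x) (v x) ∂μ

open Filter MeasureTheory Set
open scoped ENNReal NNReal Topology


open Filter MeasureTheory Set
open scoped ENNReal NNReal Topology

section LimsupHelpers

/-- limsup along a sequence tending to a filter is at most the limsup along the filter. -/
lemma limsup_comp_le_limsup {α : Type*} {l : Filter α} [l.NeBot] {f : α → ℝ} {s : ℕ → α} {C : ℝ}
    (hs : Tendsto s atTop l) (hb : ∀ᶠ p in l, |f p| ≤ C) :
    limsup (fun n => f (s n)) atTop ≤ limsup f l := by
  have hub : ∀ᶠ p in l, f p ≤ C := hb.mono fun p hp => (abs_le.1 hp).2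
  have hlb : ∀ᶠ p in l, -C ≤ f p := hb.mono fun p hp => (abs_le.1 hp).1
  by_contra hcon
  push_neg at hcon
  obtain ⟨a, ha1, ha2⟩ := exists_between hcon
  have hev : ∀ᶠ p in l, f p < a :=
    eventually_lt_of_limsup_lt ha1 ⟨C, eventually_map.2 hub⟩
  have : limsup (fun n => f (s n)) atTop ≤ a := by
    refine limsup_le_of_le (isCoboundedUnder_le_of_eventually_le atTop
      (hs.eventually hlb)) ?_
    exact (hs.eventually hev).mono fun n hn => hn.le
  exact absurd (this.trans_lt ha2) (lt_irrefl _)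

lemma limsup_const_mul_le_of_le {u : ℕ → ℝ} {c L M : ℝ} (hc : 0 ≤ c)
    (hM : ∀ᶠ n in atTop, |u n| ≤ M) (hL : limsup u atTop ≤ L) :
    limsup (fun n => c * u n) atTop ≤ c * L := by
  rcases eq_or_lt_of_le hc with h0 | h0
  · simp only [← h0, zero_mul]
    exact le_of_eq (limsup_const (0:ℝ))
  · refine le_of_forall_pos_le_add fun ε hε => ?_
    have h1 : limsup u atTop < L + ε / c := hL.trans_lt (lt_add_of_pos_right _ (by positivity))
    have h2 : ∀ᶠ n in atTop, u n < L + ε / c :=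
      eventually_lt_of_limsup_lt h1 ⟨M, eventually_map.2 (hM.mono fun n hn => (abs_le.1 hn).2)⟩
    have h3 : ∀ᶠ n in atTop, c * u n ≤ c * L + ε := by
      refine h2.mono fun n hn => ?_
      have := mul_le_mul_of_nonneg_left hn.le hc
      rw [mul_add, mul_div_cancel₀ _ h0.ne'] at this
      linarith
    refine limsup_le_of_le (isCoboundedUnder_le_of_eventually_le atTop
      (f := fun n => c * u n) (x := c * (-M)) ?_) h3
    refine hM.mono fun n hn => ?_
    exact mul_le_mul_of_nonneg_left (neg_le_of_abs_le hn) hc |>.trans_eq rfl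

lemma limsup_seq_le_of_eventually_le {u : ℕ → ℝ} {a b : ℝ}
    (hlb : ∀ᶠ n in atTop, b ≤ u n) (hub : ∀ᶠ n in atTop, u n ≤ a) :
    limsup u atTop ≤ a :=
  limsup_le_of_le (isCoboundedUnder_le_of_eventually_le atTop hlb) hub

end LimsupHelpers

section ClarkeHelpers

variable {Y : Type*} [NormedAddCommGroup Y] [NormedSpace ℝ Y]

lemma abs_clarke_quot_le {f : Y → ℝ} {c : ℝ} (hf : ∀ a b : Y, |f a - f b| ≤ c * ‖a - b‖)
    {z : Y} {p : Y × ℝ} (hp : 0 < p.2) :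
    |(f (p.1 + p.2 • z) - f p.1) / p.2| ≤ c * ‖z‖ := by
  rw [abs_div, abs_of_pos hp, div_le_iff₀ hp]
  calc |f (p.1 + p.2 • z) - f p.1| ≤ c * ‖p.1 + p.2 • z - p.1‖ := hf _ _
    _ = c * (|p.2| * ‖z‖) := by rw [add_sub_cancel_left, norm_smul]; rfl
    _ = c * ‖z‖ * p.2 := by rw [abs_of_pos hp]; ring

lemma eventually_pos_clarke {y : Y} : ∀ᶠ p in ((nhds y) ×ˢ (nhdsWithin (0:ℝ) (Set.Ioi 0))),
    (0:ℝ) < p.2 := by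
  have : Set.Ioi (0:ℝ) ∈ nhdsWithin (0:ℝ) (Set.Ioi 0) := self_mem_nhdsWithin
  exact Filter.mem_prod_iff.2 ⟨Set.univ, univ_mem, Set.Ioi 0, this, fun p hp => hp.2⟩

instance clarke_filter_neBot (y : Y) :
    ((nhds y) ×ˢ (nhdsWithin (0:ℝ) (Set.Ioi 0))).NeBot := by
  have h2 : (nhdsWithin (0:ℝ) (Set.Ioi 0)).NeBot := nhdsGT_neBot 0
  exact Filter.prod_neBot.2 ⟨inferInstance, h2⟩

lemma clarkeDeriv_le_of_lip {f : Y → ℝ} {c : ℝ} (hf : ∀ a b : Y, |f a - f b| ≤ c * ‖a - b‖)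
    (y z : Y) : clarkeDeriv f y z ≤ c * ‖z‖ := by
  refine limsup_le_of_le ?_ ?_
  · exact isCoboundedUnder_le_of_eventually_le _
      (eventually_pos_clarke.mono fun p hp => neg_le_of_abs_le (abs_clarke_quot_le hf hp))
  · exact eventually_pos_clarke.mono fun p hp => le_of_abs_le (abs_clarke_quot_le hf hp)

lemma neg_le_clarkeDeriv_of_lip {f : Y → ℝ} {c : ℝ} (hf : ∀ a b : Y, |f a - f b| ≤ c * ‖a - b‖)
    (y z : Y) : -(c * ‖z‖) ≤ clarkeDeriv f y z := by
  have hfreq : ∃ᶠ p in ((nhds y) ×ˢ (nhdsWithin (0:ℝ) (Set.Ioi 0))),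
      -(c * ‖z‖) ≤ (f (p.1 + p.2 • z) - f p.1) / p.2 :=
    (eventually_pos_clarke.mono fun p hp =>
      neg_le_of_abs_le (abs_clarke_quot_le hf hp)).frequently
  have hbd : IsBoundedUnder (· ≤ ·) ((nhds y) ×ˢ (nhdsWithin (0:ℝ) (Set.Ioi 0)))
      (fun p : Y × ℝ => (f (p.1 + p.2 • z) - f p.1) / p.2) :=
    isBoundedUnder_of_eventually_le (a := c * ‖z‖)
      (eventually_pos_clarke.mono fun p hp => le_of_abs_le (abs_clarke_quot_le hf hp))
  exact le_limsup_of_frequently_le hfreq hbd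

lemma abs_clarkeDeriv_le_of_lip {f : Y → ℝ} {c : ℝ} (hf : ∀ a b : Y, |f a - f b| ≤ c * ‖a - b‖)
    (y z : Y) : |clarkeDeriv f y z| ≤ c * ‖z‖ :=
  abs_le.2 ⟨neg_le_clarkeDeriv_of_lip hf y z, clarkeDeriv_le_of_lip hf y z⟩

set_option maxHeartbeats 1000000 in
lemma limsup_quot_le_clarkeDeriv {f : Y → ℝ} {c : ℝ}
    (hf : ∀ a b : Y, |f a - f b| ≤ c * ‖a - b‖) {y z : Y} {u : ℕ → Y} {lam : ℕ → ℝ}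
    (hu : Tendsto u atTop (nhds y)) (hl : Tendsto lam atTop (nhds 0))
    (hlpos : ∀ n, 0 < lam n) :
    limsup (fun n => (f (u n + lam n • z) - f (u n)) / lam n) atTop ≤ clarkeDeriv f y z := by
  have hls : Tendsto lam atTop (nhdsWithin (0:ℝ) (Set.Ioi 0)) :=
    tendsto_nhdsWithin_iff.2 ⟨hl, Eventually.of_forall hlpos⟩
  have hts : Tendsto (fun n => (u n, lam n)) atTop ((nhds y) ×ˢ (nhdsWithin (0:ℝ) (Set.Ioi 0))) :=
    hu.prodMk hls
  unfold clarkeDeriv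
  have hb : ∀ᶠ p in ((nhds y) ×ˢ (nhdsWithin (0:ℝ) (Set.Ioi 0))),
      |(f (p.1 + p.2 • z) - f p.1) / p.2| ≤ c * ‖z‖ :=
    eventually_pos_clarke.mono fun p hp => abs_clarke_quot_le hf hp
  exact limsup_comp_le_limsup (f := fun p : Y × ℝ => (f (p.1 + p.2 • z) - f p.1) / p.2)
    (s := fun n => (u n, lam n)) hts hb

end ClarkeHelpers

section FatouHelper

open Filter MeasureTheory Set
open scoped ENNReal NNReal Topology

lemma limsup_seq_le_of_eventually_le' {u : ℕ → ℝ} {a b : ℝ}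
    (hlb : ∀ᶠ n in Filter.atTop, b ≤ u n) (hub : ∀ᶠ n in Filter.atTop, u n ≤ a) :
    Filter.limsup u Filter.atTop ≤ a :=
  Filter.limsup_le_of_le (Filter.isCoboundedUnder_le_of_eventually_le Filter.atTop hlb) hub

variable {Ω : Type*} [MeasurableSpace Ω] {μ : MeasureTheory.Measure Ω}

/-- Dominated Fatou lemma (limsup version) for real-valued integrals. -/
lemma limsup_integral_le_of_ae {f : ℕ → Ω → ℝ} {bound h : Ω → ℝ}
    (hfm : ∀ n, AEStronglyMeasurable (f n) μ)
    (hbi : Integrable bound μ) (hhi : Integrable h μ)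
    (hfb : ∀ n, ∀ᵐ x ∂μ, |f n x| ≤ bound x)
    (hlim : ∀ᵐ x ∂μ, limsup (fun n => f n x) atTop ≤ h x) :
    limsup (fun n => ∫ x, f n x ∂μ) atTop ≤ ∫ x, h x ∂μ := by
  have hfi : ∀ n, Integrable (f n) μ := fun n =>
    hbi.mono' (hfm n) ((hfb n).mono fun x hx => by rwa [Real.norm_eq_abs])
  set h' : Ω → ℝ := fun x => min (h x) (bound x) with hh'def
  have hh'm : AEStronglyMeasurable h' μ :=
    (hhi.1.aemeasurable.min hbi.1.aemeasurable).aestronglyMeasurable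
  have hh'i : Integrable h' μ := by
    have habs : Integrable (fun x => |h x| + |bound x|) μ := hhi.abs.add hbi.abs
    refine habs.mono' hh'm (Eventually.of_forall fun x => ?_)
    rw [Real.norm_eq_abs]
    rcases le_total (h x) (bound x) with hc | hc
    · simp only [h', min_eq_left hc]
      have := abs_nonneg (bound x); linarith [abs_nonneg (h x)]
    · simp only [h', min_eq_right hc]
      have := abs_nonneg (h x); linarith [abs_nonneg (bound x)]
  have hh'h : ∫ x, h' x ∂μ ≤ ∫ x, h x ∂μ :=
    integral_mono hh'i hhi fun x => min_le_left _ _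
  suffices hmain : limsup (fun n => ∫ x, f n x ∂μ) atTop ≤ ∫ x, h' x ∂μ from hmain.trans hh'h
  have haeb : ∀ᵐ x ∂μ, ∀ n, |f n x| ≤ bound x := ae_all_iff.2 hfb
  have hlim' : ∀ᵐ x ∂μ, limsup (fun n => f n x) atTop ≤ h' x := by
    filter_upwards [haeb, hlim] with x hx hl
    refine le_min hl (limsup_seq_le_of_eventually_le'
      (Eventually.of_forall fun n => neg_le_of_abs_le (hx n))
      (Eventually.of_forall fun n => le_of_abs_le (hx n)))
  -- ENNReal Fatou on g n = bound - f n
  have hGm : ∀ n, AEMeasurable (fun x => ENNReal.ofReal (bound x - f n x)) μ := fun n =>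
    ENNReal.measurable_ofReal.comp_aemeasurable
      (hbi.1.aemeasurable.sub (hfm n).aemeasurable)
  have fatou := MeasureTheory.lintegral_liminf_le' (u := atTop) hGm
  have hsubint : ∀ n, Integrable (fun x => bound x - f n x) μ := fun n => hbi.sub (hfi n)
  have hgn : ∀ n, (∫⁻ x, ENNReal.ofReal (bound x - f n x) ∂μ)
      = ENNReal.ofReal (∫ x, (bound x - f n x) ∂μ) := fun n =>
    (ofReal_integral_eq_lintegral_ofReal (hsubint n)
      ((hfb n).mono fun x hx => by
        simp only [Pi.zero_apply]; linarith [abs_le.1 hx])).symm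
  have hpt : ∀ᵐ x ∂μ, ENNReal.ofReal (bound x - h' x)
      ≤ liminf (fun n => ENNReal.ofReal (bound x - f n x)) atTop := by
    filter_upwards [haeb, hlim'] with x hx hl
    refine ENNReal.le_of_forall_pos_le_add fun ε hε _ => ?_
    have hbdd : IsBoundedUnder (· ≤ ·) atTop (fun n => f n x) :=
      Filter.isBoundedUnder_of_eventually_le (a := bound x)
        (Eventually.of_forall fun n => le_of_abs_le (hx n))
    have hev : ∀ᶠ n in atTop, f n x < h' x + ε :=
      eventually_lt_of_limsup_lt (hl.trans_lt (lt_add_of_pos_right _ (by exact_mod_cast hε)))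
        hbdd
    have hev2 : ∀ᶠ n in atTop, ENNReal.ofReal (bound x - h' x - ε)
        ≤ ENNReal.ofReal (bound x - f n x) :=
      hev.mono fun n hn => ENNReal.ofReal_le_ofReal (by linarith)
    have hlf : ENNReal.ofReal (bound x - h' x - ε)
        ≤ liminf (fun n => ENNReal.ofReal (bound x - f n x)) atTop :=
      Filter.le_liminf_of_le (by isBoundedDefault) hev2
    calc ENNReal.ofReal (bound x - h' x)
        = ENNReal.ofReal ((bound x - h' x - ε) + ε) := by ring_nf
      _ ≤ ENNReal.ofReal (bound x - h' x - ε) + ENNReal.ofReal ε := ENNReal.ofReal_add_le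
      _ ≤ liminf (fun n => ENNReal.ofReal (bound x - f n x)) atTop + ε := by
          exact add_le_add hlf (by simp)
  have hbh' : ∀ x, 0 ≤ bound x - h' x := fun x => by
    have := min_le_right (h x) (bound x); simp only [h'] at *; linarith
  have hsubint' : Integrable (fun x => bound x - h' x) μ := hbi.sub hh'i
  have hlhs : ENNReal.ofReal (∫ x, (bound x - h' x) ∂μ)
      ≤ ∫⁻ x, liminf (fun n => ENNReal.ofReal (bound x - f n x)) atTop ∂μ := by
    rw [ofReal_integral_eq_lintegral_ofReal hsubint'
      (Eventually.of_forall fun x => hbh' x)]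
    exact lintegral_mono_ae hpt
  have hchain : ENNReal.ofReal (∫ x, (bound x - h' x) ∂μ)
      ≤ liminf (fun n => ENNReal.ofReal (∫ x, (bound x - f n x) ∂μ)) atTop := by
    refine hlhs.trans (fatou.trans_eq ?_)
    congr 1; funext n; exact hgn n
  -- now conclude by contradiction
  by_contra hcon
  push_neg at hcon
  set I : ℕ → ℝ := fun n => ∫ x, f n x ∂μ with hIdef
  have hIb : ∀ n, |I n| ≤ ∫ x, bound x ∂μ := fun n => by
    rw [← Real.norm_eq_abs]
    exact norm_integral_le_of_norm_le hbi ((hfb n).mono fun x hx => by rwa [Real.norm_eq_abs])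
  have hIB : ∫ x, h' x ∂μ ≤ ∫ x, bound x ∂μ :=
    integral_mono hh'i hbi fun x => min_le_right _ _
  set δ : ℝ := (limsup I atTop - ∫ x, h' x ∂μ) / 2 with hδdef
  have hδ : 0 < δ := by simp only [hδdef]; linarith
  have hfreq : ∃ᶠ n in atTop, (∫ x, h' x ∂μ) + δ < I n := by
    refine frequently_lt_of_lt_limsup (Filter.isCoboundedUnder_le_of_eventually_le atTop
      (x := -(∫ x, bound x ∂μ)) (Eventually.of_forall fun n => neg_le_of_abs_le (hIb n))) ?_
    simp only [hδdef]; linarith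
  have hsub : ∀ n, ∫ x, (bound x - f n x) ∂μ = (∫ x, bound x ∂μ) - I n := fun n =>
    integral_sub hbi (hfi n)
  have hfreq2 : ∃ᶠ n in atTop, ENNReal.ofReal (∫ x, (bound x - f n x) ∂μ)
      ≤ ENNReal.ofReal ((∫ x, bound x ∂μ) - (∫ x, h' x ∂μ) - δ) := by
    refine hfreq.mono fun n hn => ?_
    rw [hsub n]
    exact ENNReal.ofReal_le_ofReal (by linarith)
  have hliminf_le : liminf (fun n => ENNReal.ofReal (∫ x, (bound x - f n x) ∂μ)) atTop
      ≤ ENNReal.ofReal ((∫ x, bound x ∂μ) - (∫ x, h' x ∂μ) - δ) :=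
    Filter.liminf_le_of_frequently_le hfreq2 (by isBoundedDefault)
  have hBH : ∫ x, (bound x - h' x) ∂μ = (∫ x, bound x ∂μ) - (∫ x, h' x ∂μ) :=
    integral_sub hbi hh'i
  have hfinal : ENNReal.ofReal ((∫ x, bound x ∂μ) - (∫ x, h' x ∂μ))
      ≤ ENNReal.ofReal ((∫ x, bound x ∂μ) - (∫ x, h' x ∂μ) - δ) :=
    calc ENNReal.ofReal ((∫ x, bound x ∂μ) - (∫ x, h' x ∂μ))
        = ENNReal.ofReal (∫ x, (bound x - h' x) ∂μ) := by rw [hBH]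
      _ ≤ liminf (fun n => ENNReal.ofReal (∫ x, (bound x - f n x) ∂μ)) atTop := hchain
      _ ≤ ENNReal.ofReal ((∫ x, bound x ∂μ) - (∫ x, h' x ∂μ) - δ) := hliminf_le
  rcases le_or_gt 0 ((∫ x, bound x ∂μ) - (∫ x, h' x ∂μ) - δ) with hc | hc
  · have := (ENNReal.ofReal_le_ofReal_iff hc).1 hfinal
    linarith
  · have h0 : ENNReal.ofReal ((∫ x, bound x ∂μ) - (∫ x, h' x ∂μ)) = 0 := by
      refine le_antisymm (hfinal.trans ?_) (zero_le)
      simp [ENNReal.ofReal_eq_zero.2 hc.le]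
    have h1 : (∫ x, bound x ∂μ) - (∫ x, h' x ∂μ) ≤ 0 := ENNReal.ofReal_eq_zero.1 h0
    have h2 : limsup I atTop ≤ ∫ x, bound x ∂μ :=
      limsup_seq_le_of_eventually_le'
        (Eventually.of_forall fun n => neg_le_of_abs_le (hIb n))
        (Eventually.of_forall fun n => le_of_abs_le (hIb n))
    linarith

end FatouHelper

section MeasHelper

open Filter MeasureTheory Set
open scoped ENNReal NNReal Topology

variable {Ω : Type*} [MeasurableSpace Ω] {μ : MeasureTheory.Measure Ω}

/-- A Carathéodory-type function composed with an a.e.-measurable map is a.e.-measurable. -/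
lemma aemeasurable_comp_caratheodory {E : Type*} [TopologicalSpace E]
    [TopologicalSpace.MetrizableSpace E] [MeasurableSpace E] [SecondCountableTopology E]
    [OpensMeasurableSpace E]
    {g : Ω → E → ℝ} (hmeas : ∀ ξ : E, Measurable fun x => g x ξ)
    (hcont : ∀ᵐ x ∂μ, Continuous (g x)) {u : Ω → E} (hu : AEMeasurable u μ) :
    AEMeasurable (fun x => g x (u x)) μ := by
  obtain ⟨N, hNsub, hNmeas, hNnull⟩ :=
    exists_measurable_superset_of_null (μ := μ) (s := {x | ¬ Continuous (g x)}) (by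
      rw [← compl_setOf]
      simpa [ae_iff, Set.compl_setOf] using hcont)
  classical
  set g' : Ω → E → ℝ := fun x ξ => if x ∈ N then 0 else g x ξ with hg'def
  have hmeas' : ∀ ξ : E, Measurable fun x => g' x ξ := fun ξ => by
    simp only [g']
    exact Measurable.ite hNmeas measurable_const (hmeas ξ)
  have hcont' : ∀ x, Continuous fun ξ => g' x ξ := by
    intro x
    by_cases hx : x ∈ N
    · simp only [g', if_pos hx]; exact continuous_const
    · simp only [g', if_neg hx]
      by_contra hc
      exact hx (hNsub hc)
  have huncurry : Measurable (Function.uncurry fun ξ x => g' x ξ) :=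
    measurable_uncurry_of_continuous_of_measurable
      (u := fun ξ x => g' x ξ) (fun x => hcont' x) (fun ξ => hmeas' ξ)
  have hmk : Measurable (fun x => g' x (hu.mk u x)) := by
    have : (fun x => g' x (hu.mk u x))
        = (Function.uncurry fun ξ x => g' x ξ) ∘ (fun x => (hu.mk u x, x)) := rfl
    rw [this]
    exact huncurry.comp (hu.measurable_mk.prodMk measurable_id)
  refine ⟨fun x => g' x (hu.mk u x), hmk, ?_⟩
  have hN' : ∀ᵐ x ∂μ, x ∉ N := by
    rw [ae_iff]; simpa using hNnull
  filter_upwards [hu.ae_eq_mk, hN'] with x hx hxN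
  simp only [g', if_neg hxN, hx]

end MeasHelper

section ProjHelper

open scoped RealInnerProductSpace

variable {E : Type*} [NormedAddCommGroup E] [InnerProductSpace ℝ E]

lemma norm_proj_le {ν : E} (hν : ‖ν‖ = 1) (ξ : E) : ‖ξ - ⟪ξ, ν⟫ • ν‖ ≤ ‖ξ‖ := by
  have hs : ‖ξ - ⟪ξ, ν⟫ • ν‖ ^ 2 = ‖ξ‖ ^ 2 - ⟪ξ, ν⟫ ^ 2 := by
    rw [norm_sub_sq_real, norm_smul, real_inner_smul_right, hν]
    simp [mul_pow]
    ring
  nlinarith [norm_nonneg (ξ - ⟪ξ, ν⟫ • ν), norm_nonneg ξ, sq_nonneg ⟪ξ, ν⟫]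

lemma proj_linear {ν : E} (ξ ζ : E) (l : ℝ) :
    (ξ + l • ζ) - ⟪ξ + l • ζ, ν⟫ • ν = (ξ - ⟪ξ, ν⟫ • ν) + l • (ζ - ⟪ζ, ν⟫ • ν) := by
  rw [inner_add_left, real_inner_smul_left]
  rw [smul_sub, add_smul, smul_smul]
  abel

lemma proj_sub {ν : E} (ξ ζ : E) :
    (ξ - ζ) - ⟪ξ - ζ, ν⟫ • ν = (ξ - ⟪ξ, ν⟫ • ν) - (ζ - ⟪ζ, ν⟫ • ν) := by
  rw [inner_sub_left, sub_smul]
  abel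

end ProjHelper

section L2Helper

open Filter MeasureTheory Set
open scoped ENNReal NNReal Topology

variable {Ω : Type*} [MeasurableSpace Ω] {μ : MeasureTheory.Measure Ω}
variable {E : Type*} [NormedAddCommGroup E] [InnerProductSpace ℝ E]

lemma integral_norm_sq_eq (f : Lp E 2 μ) : ∫ x, ‖f x‖ ^ 2 ∂μ = ‖f‖ ^ 2 := by
  have h1 : (inner ℝ f f : ℝ) = ∫ x, (inner ℝ (f x) (f x) : ℝ) ∂μ := MeasureTheory.L2.inner_def f f
  have h2 : (inner ℝ f f : ℝ) = ‖f‖ ^ 2 := real_inner_self_eq_norm_sq f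
  rw [← h2, h1]
  refine integral_congr_ae (Eventually.of_forall fun x => ?_)
  simpa using (real_inner_self_eq_norm_sq (f x)).symm

lemma integrable_norm_sq (f : Lp E 2 μ) : Integrable (fun x => ‖f x‖ ^ 2) μ := by
  refine (MeasureTheory.L2.integrable_inner (𝕜 := ℝ) f f).congr
    (Eventually.of_forall fun x => ?_)
  simpa using real_inner_self_eq_norm_sq (f x)

lemma integrable_norm_mul_norm (f g : Lp E 2 μ) :
    Integrable (fun x => ‖f x‖ * ‖g x‖) μ := by
  have hf : MeasureTheory.MemLp (fun x => ‖f x‖) 2 μ := (Lp.memLp f).norm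
  have hg : MeasureTheory.MemLp (fun x => ‖g x‖) 2 μ := (Lp.memLp g).norm
  set A : Lp ℝ 2 μ := hf.toLp _ with hA
  set B : Lp ℝ 2 μ := hg.toLp _ with hB
  have h1 : Integrable (fun x => (inner ℝ (A x) (B x) : ℝ)) μ :=
    MeasureTheory.L2.integrable_inner (𝕜 := ℝ) A B
  refine h1.congr ?_
  filter_upwards [hf.coeFn_toLp, hg.coeFn_toLp] with x hx hy
  simp only [RCLike.inner_apply', starRingEnd_apply, star_trivial]
  rw [hx, hy]

lemma integral_norm_mul_norm_le (f g : Lp E 2 μ) :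
    ∫ x, ‖f x‖ * ‖g x‖ ∂μ ≤ ‖f‖ * ‖g‖ := by
  have hf : MeasureTheory.MemLp (fun x => ‖f x‖) 2 μ := (Lp.memLp f).norm
  have hg : MeasureTheory.MemLp (fun x => ‖g x‖) 2 μ := (Lp.memLp g).norm
  set A : Lp ℝ 2 μ := hf.toLp _ with hA
  set B : Lp ℝ 2 μ := hg.toLp _ with hB
  have h1 : (inner ℝ A B : ℝ) = ∫ x, (inner ℝ (A x) (B x) : ℝ) ∂μ := MeasureTheory.L2.inner_def A B
  have h2 : ∫ x, (inner ℝ (A x) (B x) : ℝ) ∂μ = ∫ x, ‖f x‖ * ‖g x‖ ∂μ := by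
    refine integral_congr_ae ?_
    filter_upwards [hf.coeFn_toLp, hg.coeFn_toLp] with x hx hy
    simp only [RCLike.inner_apply', starRingEnd_apply, star_trivial]
    rw [hx, hy]
  have hAn : ‖A‖ = ‖f‖ := by
    rw [hA, MeasureTheory.Lp.norm_toLp, MeasureTheory.eLpNorm_norm, MeasureTheory.Lp.norm_def]
  have hBn : ‖B‖ = ‖g‖ := by
    rw [hB, MeasureTheory.Lp.norm_toLp, MeasureTheory.eLpNorm_norm, MeasureTheory.Lp.norm_def]
  calc ∫ x, ‖f x‖ * ‖g x‖ ∂μ = (inner ℝ A B : ℝ) := by rw [h1, h2]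
    _ ≤ ‖A‖ * ‖B‖ := real_inner_le_norm A B
    _ = ‖f‖ * ‖g‖ := by rw [hAn, hBn]

end L2Helper

section PointwiseHelper

open scoped RealInnerProductSpace

variable {E : Type*} [NormedAddCommGroup E] [InnerProductSpace ℝ E]

/-- Algebraic identity for the difference quotient of the contact integrand. -/
lemma jfun_quot_eq (gνx gτx : ℝ → ℝ) (jτx : E → ℝ) (νx η ξ ζ : E) {l : ℝ} (hl : l ≠ 0) :
    (gνx ⟪η, νx⟫ * ⟪ξ + l • ζ, νx⟫ + gτx ⟪η, νx⟫ * jτx ((ξ + l • ζ) - ⟪ξ + l • ζ, νx⟫ • νx)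
      - (gνx ⟪η, νx⟫ * ⟪ξ, νx⟫ + gτx ⟪η, νx⟫ * jτx (ξ - ⟪ξ, νx⟫ • νx))) / l
    = gνx ⟪η, νx⟫ * ⟪ζ, νx⟫ + gτx ⟪η, νx⟫ *
        ((jτx ((ξ - ⟪ξ, νx⟫ • νx) + l • (ζ - ⟪ζ, νx⟫ • νx)) - jτx (ξ - ⟪ξ, νx⟫ • νx)) / l) := by
  rw [proj_linear, inner_add_left, real_inner_smul_left]
  field_simp
  ring

lemma jfun_quot_abs_le {gbarν gbarτ cτ : ℝ} (gνx gτx : ℝ → ℝ) (jτx : E → ℝ) (νx : E)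
    (hν : ‖νx‖ = 1) (hgν : ∀ r, 0 ≤ gνx r ∧ gνx r ≤ gbarν) (hgτ : ∀ r, 0 ≤ gτx r ∧ gτx r ≤ gbarτ)
    (hjl : ∀ a b : E, |jτx a - jτx b| ≤ cτ * ‖a - b‖) (hcτ : 0 ≤ cτ)
    (η ξ ζ : E) {l : ℝ} (hl : 0 < l) :
    |(gνx ⟪η, νx⟫ * ⟪ξ + l • ζ, νx⟫ + gτx ⟪η, νx⟫ * jτx ((ξ + l • ζ) - ⟪ξ + l • ζ, νx⟫ • νx)
      - (gνx ⟪η, νx⟫ * ⟪ξ, νx⟫ + gτx ⟪η, νx⟫ * jτx (ξ - ⟪ξ, νx⟫ • νx))) / l|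
    ≤ (gbarν + gbarτ * cτ) * ‖ζ‖ := by
  rw [jfun_quot_eq gνx gτx jτx νx η ξ ζ hl.ne']
  have h1 : |⟪ζ, νx⟫| ≤ ‖ζ‖ := by
    calc |⟪ζ, νx⟫| ≤ ‖ζ‖ * ‖νx‖ := abs_real_inner_le_norm ζ νx
      _ = ‖ζ‖ := by rw [hν, mul_one]
  have h2 : |(jτx ((ξ - ⟪ξ, νx⟫ • νx) + l • (ζ - ⟪ζ, νx⟫ • νx)) - jτx (ξ - ⟪ξ, νx⟫ • νx)) / l|
      ≤ cτ * ‖ζ - ⟪ζ, νx⟫ • νx‖ :=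
    abs_clarke_quot_le hjl (p := (ξ - ⟪ξ, νx⟫ • νx, l)) hl
  have h3 : ‖ζ - ⟪ζ, νx⟫ • νx‖ ≤ ‖ζ‖ := norm_proj_le hν ζ
  have hgν0 := (hgν ⟪η, νx⟫).1
  have hgν1 := (hgν ⟪η, νx⟫).2
  have hgτ0 := (hgτ ⟪η, νx⟫).1
  have hgτ1 := (hgτ ⟪η, νx⟫).2
  have hz : (0:ℝ) ≤ ‖ζ‖ := norm_nonneg ζ
  calc |gνx ⟪η, νx⟫ * ⟪ζ, νx⟫ + gτx ⟪η, νx⟫ *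
        ((jτx ((ξ - ⟪ξ, νx⟫ • νx) + l • (ζ - ⟪ζ, νx⟫ • νx)) - jτx (ξ - ⟪ξ, νx⟫ • νx)) / l)|
      ≤ |gνx ⟪η, νx⟫| * |⟪ζ, νx⟫| + |gτx ⟪η, νx⟫| *
        |(jτx ((ξ - ⟪ξ, νx⟫ • νx) + l • (ζ - ⟪ζ, νx⟫ • νx)) - jτx (ξ - ⟪ξ, νx⟫ • νx)) / l| := by
        rw [← abs_mul, ← abs_mul]; exact abs_add_le _ _
    _ ≤ gbarν * ‖ζ‖ + gbarτ * (cτ * ‖ζ‖) := by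
        have e1 : |gνx ⟪η, νx⟫| = gνx ⟪η, νx⟫ := abs_of_nonneg hgν0
        have e2 : |gτx ⟪η, νx⟫| = gτx ⟪η, νx⟫ := abs_of_nonneg hgτ0
        rw [e1, e2]
        have t1 : gνx ⟪η, νx⟫ * |⟪ζ, νx⟫| ≤ gbarν * ‖ζ‖ :=
          mul_le_mul hgν1 h1 (abs_nonneg _) (le_trans hgν0 hgν1)
        have t2 : gτx ⟪η, νx⟫ * |(jτx ((ξ - ⟪ξ, νx⟫ • νx) + l • (ζ - ⟪ζ, νx⟫ • νx))
            - jτx (ξ - ⟪ξ, νx⟫ • νx)) / l| ≤ gbarτ * (cτ * ‖ζ‖) := by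
          refine mul_le_mul hgτ1 (h2.trans ?_) (abs_nonneg _) (le_trans hgτ0 hgτ1)
          exact mul_le_mul_of_nonneg_left h3 hcτ
        linarith
    _ = (gbarν + gbarτ * cτ) * ‖ζ‖ := by ring

end PointwiseHelper

section CoreHelper

open Filter Set
open scoped RealInnerProductSpace Topology

variable {E : Type*} [NormedAddCommGroup E] [InnerProductSpace ℝ E]

set_option maxHeartbeats 2000000 in
lemma core_limsup_bound (jτx : E → ℝ) (νx : E) (hν : ‖νx‖ = 1)
    {cτ ατ Lgν Lgτ gbarτ : ℝ} (hcτ : 0 ≤ cτ) (hατ : 0 ≤ ατ)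
    (hLgν0 : 0 ≤ Lgν) (hLgτ0 : 0 ≤ Lgτ)
    (hjl : ∀ a b : E, |jτx a - jτx b| ≤ cτ * ‖a - b‖)
    (V₁ V₂ : E)
    (hmon : clarkeDeriv jτx (V₁ - ⟪V₁, νx⟫ • νx)
          ((V₂ - ⟪V₂, νx⟫ • νx) - (V₁ - ⟪V₁, νx⟫ • νx))
        + clarkeDeriv jτx (V₂ - ⟪V₂, νx⟫ • νx)
          ((V₁ - ⟪V₁, νx⟫ • νx) - (V₂ - ⟪V₂, νx⟫ • νx))
        ≤ ατ * ‖(V₁ - ⟪V₁, νx⟫ • νx) - (V₂ - ⟪V₂, νx⟫ • νx)‖ ^ 2)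
    {a₁ a₂ b₁ b₂ : ℝ} {ω : E}
    (ha : |a₁ - a₂| ≤ Lgν * ‖ω‖) (hb : |b₂ - b₁| ≤ Lgτ * ‖ω‖)
    (hb₁0 : 0 ≤ b₁) (hb₁1 : b₁ ≤ gbarτ) (hb₂0 : 0 ≤ b₂) (hb₂1 : b₂ ≤ gbarτ)
    {u₁ u₂ : ℕ → E} {l₁ l₂ : ℕ → ℝ}
    (hu₁ : Tendsto u₁ atTop (nhds V₁)) (hu₂ : Tendsto u₂ atTop (nhds V₂))
    (hl₁ : Tendsto l₁ atTop (nhds 0)) (hl₂ : Tendsto l₂ atTop (nhds 0))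
    (hl₁p : ∀ n, 0 < l₁ n) (hl₂p : ∀ n, 0 < l₂ n) :
    limsup (fun n =>
      (a₁ * ⟪V₂ - V₁, νx⟫ + b₁ * ((jτx ((u₁ n - ⟪u₁ n, νx⟫ • νx)
          + l₁ n • ((V₂ - V₁) - ⟪V₂ - V₁, νx⟫ • νx)) - jτx (u₁ n - ⟪u₁ n, νx⟫ • νx)) / l₁ n))
      + (a₂ * ⟪V₁ - V₂, νx⟫ + b₂ * ((jτx ((u₂ n - ⟪u₂ n, νx⟫ • νx)
          + l₂ n • ((V₁ - V₂) - ⟪V₁ - V₂, νx⟫ • νx)) - jτx (u₂ n - ⟪u₂ n, νx⟫ • νx)) / l₂ n)))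
      atTop
    ≤ gbarτ * ατ * ‖V₂ - V₁‖ ^ 2 + (Lgν + Lgτ * cτ) * (‖ω‖ * ‖V₂ - V₁‖) := by
  have hPcont : Continuous (fun a : E => a - ⟪a, νx⟫ • νx) :=
    continuous_id.sub ((continuous_id.inner continuous_const).smul continuous_const)
  set Q₁ : ℕ → ℝ := fun n => (jτx ((u₁ n - ⟪u₁ n, νx⟫ • νx)
      + l₁ n • ((V₂ - V₁) - ⟪V₂ - V₁, νx⟫ • νx)) - jτx (u₁ n - ⟪u₁ n, νx⟫ • νx)) / l₁ n
    with hQ₁def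
  set Q₂ : ℕ → ℝ := fun n => (jτx ((u₂ n - ⟪u₂ n, νx⟫ • νx)
      + l₂ n • ((V₁ - V₂) - ⟪V₁ - V₂, νx⟫ • νx)) - jτx (u₂ n - ⟪u₂ n, νx⟫ • νx)) / l₂ n
    with hQ₂def
  set d₁ : ℝ := clarkeDeriv jτx (V₁ - ⟪V₁, νx⟫ • νx) ((V₂ - V₁) - ⟪V₂ - V₁, νx⟫ • νx)
    with hd₁def
  set d₂ : ℝ := clarkeDeriv jτx (V₂ - ⟪V₂, νx⟫ • νx) ((V₁ - V₂) - ⟪V₁ - V₂, νx⟫ • νx)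
    with hd₂def
  -- rewrite the monotonicity hypothesis
  have hps₁ : (V₂ - V₁) - ⟪V₂ - V₁, νx⟫ • νx
      = (V₂ - ⟪V₂, νx⟫ • νx) - (V₁ - ⟪V₁, νx⟫ • νx) := proj_sub V₂ V₁
  have hps₂ : (V₁ - V₂) - ⟪V₁ - V₂, νx⟫ • νx
      = (V₁ - ⟪V₁, νx⟫ • νx) - (V₂ - ⟪V₂, νx⟫ • νx) := proj_sub V₁ V₂
  have hmon' : d₁ + d₂ ≤ ατ * ‖(V₁ - V₂) - ⟪V₁ - V₂, νx⟫ • νx‖ ^ 2 := by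
    rw [hd₁def, hd₂def, hps₁, hps₂]
    exact hmon
  have hproj₁ : ‖(V₂ - V₁) - ⟪V₂ - V₁, νx⟫ • νx‖ ≤ ‖V₂ - V₁‖ := norm_proj_le hν _
  have hproj₂ : ‖(V₁ - V₂) - ⟪V₁ - V₂, νx⟫ • νx‖ ≤ ‖V₂ - V₁‖ :=
    (norm_proj_le hν _).trans_eq (norm_sub_rev _ _)
  -- limsup of the quotients
  have hu₁P : Tendsto (fun n => u₁ n - ⟪u₁ n, νx⟫ • νx) atTop
      (nhds (V₁ - ⟪V₁, νx⟫ • νx)) := ((hPcont.tendsto V₁).comp hu₁ : _)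
  have hu₂P : Tendsto (fun n => u₂ n - ⟪u₂ n, νx⟫ • νx) atTop
      (nhds (V₂ - ⟪V₂, νx⟫ • νx)) := ((hPcont.tendsto V₂).comp hu₂ : _)
  have hQ₁lim : limsup Q₁ atTop ≤ d₁ :=
    limsup_quot_le_clarkeDeriv hjl hu₁P hl₁ hl₁p
  have hQ₂lim : limsup Q₂ atTop ≤ d₂ :=
    limsup_quot_le_clarkeDeriv hjl hu₂P hl₂ hl₂p
  have hQ₁bd : ∀ n, |Q₁ n| ≤ cτ * ‖(V₂ - V₁) - ⟪V₂ - V₁, νx⟫ • νx‖ := fun n =>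
    abs_clarke_quot_le hjl (p := (u₁ n - ⟪u₁ n, νx⟫ • νx, l₁ n)) (hl₁p n)
  have hQ₂bd : ∀ n, |Q₂ n| ≤ cτ * ‖(V₁ - V₂) - ⟪V₁ - V₂, νx⟫ • νx‖ := fun n =>
    abs_clarke_quot_le hjl (p := (u₂ n - ⟪u₂ n, νx⟫ • νx, l₂ n)) (hl₂p n)
  have hd₂bd : |d₂| ≤ cτ * ‖(V₁ - V₂) - ⟪V₁ - V₂, νx⟫ • νx‖ :=
    abs_clarkeDeriv_le_of_lip hjl _ _
  set K : ℝ := cτ * ‖V₂ - V₁‖ with hKdef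
  have hK0 : 0 ≤ K := mul_nonneg hcτ (norm_nonneg _)
  have hQ₁bd' : ∀ n, |Q₁ n| ≤ K := fun n =>
    (hQ₁bd n).trans (mul_le_mul_of_nonneg_left hproj₁ hcτ)
  have hQ₂bd' : ∀ n, |Q₂ n| ≤ K := fun n =>
    (hQ₂bd n).trans (mul_le_mul_of_nonneg_left hproj₂ hcτ)
  have hbQ₁ : limsup (fun n => b₁ * Q₁ n) atTop ≤ b₁ * d₁ :=
    limsup_const_mul_le_of_le hb₁0 (Filter.Eventually.of_forall hQ₁bd') hQ₁lim
  have hbQ₂ : limsup (fun n => b₂ * Q₂ n) atTop ≤ b₂ * d₂ :=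
    limsup_const_mul_le_of_le hb₂0 (Filter.Eventually.of_forall hQ₂bd') hQ₂lim
  have hsum : limsup (fun n => b₁ * Q₁ n + b₂ * Q₂ n) atTop ≤ b₁ * d₁ + b₂ * d₂ := by
    have h₁ : Filter.IsBoundedUnder (· ≥ ·) atTop (fun n => b₁ * Q₁ n) :=
      Filter.isBoundedUnder_of ⟨-(gbarτ * K), fun n => by
        have := neg_le_of_abs_le (hQ₁bd' n)
        nlinarith [abs_nonneg (Q₁ n), le_of_abs_le (hQ₁bd' n)]⟩
    have h₂ : Filter.IsBoundedUnder (· ≤ ·) atTop (fun n => b₁ * Q₁ n) :=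
      Filter.isBoundedUnder_of ⟨gbarτ * K, fun n => by
        nlinarith [neg_le_of_abs_le (hQ₁bd' n), le_of_abs_le (hQ₁bd' n)]⟩
    have h₄ : Filter.IsBoundedUnder (· ≤ ·) atTop (fun n => b₂ * Q₂ n) :=
      Filter.isBoundedUnder_of ⟨gbarτ * K, fun n => by
        nlinarith [neg_le_of_abs_le (hQ₂bd' n), le_of_abs_le (hQ₂bd' n)]⟩
    have h₃ : Filter.IsCoboundedUnder (· ≤ ·) atTop (fun n => b₂ * Q₂ n) :=
      Filter.isCoboundedUnder_le_of_eventually_le atTop (x := -(gbarτ * K))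
        (Filter.Eventually.of_forall fun n => by
          nlinarith [neg_le_of_abs_le (hQ₂bd' n), le_of_abs_le (hQ₂bd' n)])
    have hadd : limsup ((fun n => b₁ * Q₁ n) + fun n => b₂ * Q₂ n) atTop
        ≤ limsup (fun n => b₁ * Q₁ n) atTop + limsup (fun n => b₂ * Q₂ n) atTop :=
      limsup_add_le h₁ h₂ h₃ h₄
    calc limsup (fun n => b₁ * Q₁ n + b₂ * Q₂ n) atTop
        = limsup ((fun n => b₁ * Q₁ n) + fun n => b₂ * Q₂ n) atTop := rfl
      _ ≤ _ := hadd
      _ ≤ b₁ * d₁ + b₂ * d₂ := add_le_add hbQ₁ hbQ₂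
  -- put the constant part back
  set c₀ : ℝ := a₁ * ⟪V₂ - V₁, νx⟫ + a₂ * ⟪V₁ - V₂, νx⟫ with hc₀def
  have htotal : limsup (fun n =>
      (a₁ * ⟪V₂ - V₁, νx⟫ + b₁ * Q₁ n) + (a₂ * ⟪V₁ - V₂, νx⟫ + b₂ * Q₂ n)) atTop
      ≤ c₀ + (b₁ * d₁ + b₂ * d₂) := by
    have hre : (fun n => (a₁ * ⟪V₂ - V₁, νx⟫ + b₁ * Q₁ n)
        + (a₂ * ⟪V₁ - V₂, νx⟫ + b₂ * Q₂ n))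
        = (fun _ : ℕ => c₀) + fun n => b₁ * Q₁ n + b₂ * Q₂ n := by
      funext n; simp only [Pi.add_apply, hc₀def]; ring
    rw [hre]
    have h₁ : Filter.IsBoundedUnder (· ≥ ·) atTop (fun _ : ℕ => c₀) :=
      Filter.isBoundedUnder_of ⟨c₀, fun _ => le_refl _⟩
    have h₂ : Filter.IsBoundedUnder (· ≤ ·) atTop (fun _ : ℕ => c₀) :=
      Filter.isBoundedUnder_of ⟨c₀, fun _ => le_refl _⟩
    have h₃ : Filter.IsCoboundedUnder (· ≤ ·) atTop (fun n => b₁ * Q₁ n + b₂ * Q₂ n) :=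
      Filter.isCoboundedUnder_le_of_eventually_le atTop (x := -(gbarτ * K) + -(gbarτ * K))
        (Filter.Eventually.of_forall fun n => by
          nlinarith [neg_le_of_abs_le (hQ₁bd' n), le_of_abs_le (hQ₁bd' n),
            neg_le_of_abs_le (hQ₂bd' n), le_of_abs_le (hQ₂bd' n)])
    have h₄ : Filter.IsBoundedUnder (· ≤ ·) atTop (fun n => b₁ * Q₁ n + b₂ * Q₂ n) :=
      Filter.isBoundedUnder_of ⟨gbarτ * K + gbarτ * K, fun n => by
        nlinarith [neg_le_of_abs_le (hQ₁bd' n), le_of_abs_le (hQ₁bd' n),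
          neg_le_of_abs_le (hQ₂bd' n), le_of_abs_le (hQ₂bd' n)]⟩
    have := limsup_add_le h₁ h₂ h₃ h₄
    refine this.trans ?_
    rw [limsup_const]
    exact add_le_add_right hsum c₀
  refine htotal.trans ?_
  -- final arithmetic
  have hinner_neg : ⟪V₁ - V₂, νx⟫ = -⟪V₂ - V₁, νx⟫ := by
    rw [← neg_sub V₂ V₁, inner_neg_left]
  have hinner_bd : |⟪V₂ - V₁, νx⟫| ≤ ‖V₂ - V₁‖ := by
    calc |⟪V₂ - V₁, νx⟫| ≤ ‖V₂ - V₁‖ * ‖νx‖ := abs_real_inner_le_norm _ _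
      _ = ‖V₂ - V₁‖ := by rw [hν, mul_one]
  have hc₀bd : c₀ ≤ Lgν * ‖ω‖ * ‖V₂ - V₁‖ := by
    have : c₀ = (a₁ - a₂) * ⟪V₂ - V₁, νx⟫ := by
      rw [hc₀def, hinner_neg]; ring
    rw [this]
    calc (a₁ - a₂) * ⟪V₂ - V₁, νx⟫ ≤ |(a₁ - a₂) * ⟪V₂ - V₁, νx⟫| := le_abs_self _
      _ = |a₁ - a₂| * |⟪V₂ - V₁, νx⟫| := abs_mul _ _
      _ ≤ (Lgν * ‖ω‖) * ‖V₂ - V₁‖ :=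
          mul_le_mul ha hinner_bd (abs_nonneg _) (mul_nonneg hLgν0 (norm_nonneg _))
      _ = Lgν * ‖ω‖ * ‖V₂ - V₁‖ := by ring
  have hproj_sq : ‖(V₁ - V₂) - ⟪V₁ - V₂, νx⟫ • νx‖ ^ 2 ≤ ‖V₂ - V₁‖ ^ 2 := by
    have h := hproj₂
    nlinarith [norm_nonneg ((V₁ - V₂) - ⟪V₁ - V₂, νx⟫ • νx), norm_nonneg (V₂ - V₁)]
  have t3 : b₁ * (d₁ + d₂) ≤ gbarτ * (ατ * ‖V₂ - V₁‖ ^ 2) := by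
    have s1 : d₁ + d₂ ≤ ατ * ‖V₂ - V₁‖ ^ 2 :=
      hmon'.trans (mul_le_mul_of_nonneg_left hproj_sq hατ)
    have s2 : b₁ * (d₁ + d₂) ≤ b₁ * (ατ * ‖V₂ - V₁‖ ^ 2) :=
      mul_le_mul_of_nonneg_left s1 hb₁0
    refine s2.trans ?_
    refine mul_le_mul_of_nonneg_right hb₁1 ?_
    positivity
  have t4 : (b₂ - b₁) * d₂ ≤ (Lgτ * ‖ω‖) * (cτ * ‖V₂ - V₁‖) := by
    calc (b₂ - b₁) * d₂ ≤ |(b₂ - b₁) * d₂| := le_abs_self _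
      _ = |b₂ - b₁| * |d₂| := abs_mul _ _
      _ ≤ (Lgτ * ‖ω‖) * (cτ * ‖V₂ - V₁‖) := by
          refine mul_le_mul hb (hd₂bd.trans ?_) (abs_nonneg _)
            (mul_nonneg hLgτ0 (norm_nonneg _))
          exact mul_le_mul_of_nonneg_left hproj₂ hcτ
  have hbsplit : b₁ * d₁ + b₂ * d₂ = b₁ * (d₁ + d₂) + (b₂ - b₁) * d₂ := by ring
  rw [hbsplit]
  nlinarith [hc₀bd, t3, t4]

end CoreHelper

set_option maxHeartbeats 2000000 in
set_option synthInstance.maxHeartbeats 400000 in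
/-- Under the additional relaxed-monotonicity assumption on `j_τ(x,·)`,
the contact functional `J` satisfies H(J)(c) with `m_{J1} = ḡ_τ α_τ` and
`m_{J2} = L_{g_ν} + L_{g_τ} c_τ`. -/
theorem Jfun_relaxed_monotonicity
    {Ω : Type*} [MeasurableSpace Ω] (μ : MeasureTheory.Measure Ω)
    [MeasureTheory.IsFiniteMeasure μ]
    {d : ℕ} (hd : 1 ≤ d)
    (ν : Ω → EuclideanSpace ℝ (Fin d)) (hνmeas : Measurable ν)
    (hνunit : ∀ᵐ x ∂μ, ‖ν x‖ = 1)
    (gν gτ : Ω → ℝ → ℝ)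
    (hgνmeas : ∀ r : ℝ, Measurable fun x => gν x r)
    (hgτmeas : ∀ r : ℝ, Measurable fun x => gτ x r)
    (gbarν gbarτ : ℝ) (hgbarν : 0 < gbarν) (hgbarτ : 0 < gbarτ)
    (hgνbd : ∀ᵐ x ∂μ, ∀ r : ℝ, 0 ≤ gν x r ∧ gν x r ≤ gbarν)
    (hgτbd : ∀ᵐ x ∂μ, ∀ r : ℝ, 0 ≤ gτ x r ∧ gτ x r ≤ gbarτ)
    (Lgν Lgτ : ℝ) (hLgν : 0 < Lgν) (hLgτ : 0 < Lgτ)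
    (hgνlip : ∀ᵐ x ∂μ, ∀ r₁ r₂ : ℝ, |gν x r₁ - gν x r₂| ≤ Lgν * |r₁ - r₂|)
    (hgτlip : ∀ᵐ x ∂μ, ∀ r₁ r₂ : ℝ, |gτ x r₁ - gτ x r₂| ≤ Lgτ * |r₁ - r₂|)
    (jτ : Ω → EuclideanSpace ℝ (Fin d) → ℝ)
    (hjτmeas : ∀ ξ : EuclideanSpace ℝ (Fin d), Measurable fun x => jτ x ξ)
    (cτ : ℝ) (hcτ : 0 < cτ)
    (hjτlip : ∀ᵐ x ∂μ, ∀ ξ₁ ξ₂ : EuclideanSpace ℝ (Fin d),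
      |jτ x ξ₁ - jτ x ξ₂| ≤ cτ * ‖ξ₁ - ξ₂‖)
    (e : Ω → EuclideanSpace ℝ (Fin d)) (he : MeasureTheory.MemLp e 2 μ)
    (hjτe : MeasureTheory.Integrable (fun x => jτ x (e x)) μ)
    (ατ : ℝ) (hατ : 0 ≤ ατ)
    (hjτmon : ∀ᵐ x ∂μ, ∀ ξ₁ ξ₂ : EuclideanSpace ℝ (Fin d),
      clarkeDeriv (jτ x) ξ₁ (ξ₂ - ξ₁) + clarkeDeriv (jτ x) ξ₂ (ξ₁ - ξ₂) ≤
        ατ * ‖ξ₁ - ξ₂‖ ^ 2) :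
    ∀ w₁ w₂ v₁ v₂ : Lp (EuclideanSpace ℝ (Fin d)) 2 μ,
      clarkeDeriv (Jfun μ ν gν gτ jτ w₁) v₁ (v₂ - v₁) +
        clarkeDeriv (Jfun μ ν gν gτ jτ w₂) v₂ (v₁ - v₂) ≤
      gbarτ * ατ * ‖v₁ - v₂‖ ^ 2 + (Lgν + Lgτ * cτ) * ‖w₁ - w₂‖ * ‖v₁ - v₂‖ := by
  classical
  intro w₁ w₂ v₁ v₂
  set z : Lp (EuclideanSpace ℝ (Fin d)) 2 μ := v₂ - v₁ with hzdef
  set z' : Lp (EuclideanSpace ℝ (Fin d)) 2 μ := v₁ - v₂ with hz'def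
  set W : Lp (EuclideanSpace ℝ (Fin d)) 2 μ := w₁ - w₂ with hWdef
  -- continuity a.e. of the Carathéodory functions
  have hgνcont : ∀ᵐ x ∂μ, Continuous (gν x) := by
    filter_upwards [hgνlip] with x hx
    refine (LipschitzWith.of_dist_le_mul (K := Real.toNNReal Lgν) fun a b => ?_).continuous
    rw [Real.dist_eq, Real.dist_eq, Real.coe_toNNReal _ hLgν.le]
    exact hx a b
  have hgτcont : ∀ᵐ x ∂μ, Continuous (gτ x) := by
    filter_upwards [hgτlip] with x hx
    refine (LipschitzWith.of_dist_le_mul (K := Real.toNNReal Lgτ) fun a b => ?_).continuous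
    rw [Real.dist_eq, Real.dist_eq, Real.coe_toNNReal _ hLgτ.le]
    exact hx a b
  have hjτcont : ∀ᵐ x ∂μ, Continuous (jτ x) := by
    filter_upwards [hjτlip] with x hx
    refine (LipschitzWith.of_dist_le_mul (K := Real.toNNReal cτ) fun a b => ?_).continuous
    rw [Real.dist_eq, dist_eq_norm, Real.coe_toNNReal _ hcτ.le]
    exact hx a b
  -- measurability of the composed maps
  have hinner_meas : ∀ {v : Ω → EuclideanSpace ℝ (Fin d)}, AEMeasurable v μ →
      AEMeasurable (fun x => (inner ℝ (v x) (ν x) : ℝ)) μ := fun hv =>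
    AEMeasurable.inner hv hνmeas.aemeasurable
  have hproj_meas : ∀ {v : Ω → EuclideanSpace ℝ (Fin d)}, AEMeasurable v μ →
      AEMeasurable (fun x => v x - (inner ℝ (v x) (ν x) : ℝ) • ν x) μ := fun hv =>
    hv.sub ((hinner_meas hv).smul hνmeas.aemeasurable)
  have hgνcomp : ∀ {u : Ω → ℝ}, AEMeasurable u μ →
      AEMeasurable (fun x => gν x (u x)) μ := fun hu =>
    aemeasurable_comp_caratheodory hgνmeas hgνcont hu
  have hgτcomp : ∀ {u : Ω → ℝ}, AEMeasurable u μ →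
      AEMeasurable (fun x => gτ x (u x)) μ := fun hu =>
    aemeasurable_comp_caratheodory hgτmeas hgτcont hu
  have hjτcomp : ∀ {v : Ω → EuclideanSpace ℝ (Fin d)}, AEMeasurable v μ →
      AEMeasurable (fun x => jτ x (v x - (inner ℝ (v x) (ν x) : ℝ) • ν x)) μ := fun hv =>
    aemeasurable_comp_caratheodory hjτmeas hjτcont (hproj_meas hv)
  have hmjfun : ∀ (w : Lp (EuclideanSpace ℝ (Fin d)) 2 μ) {v : Ω → EuclideanSpace ℝ (Fin d)},
      AEMeasurable v μ → AEMeasurable (fun x => jfun ν gν gτ jτ x (w x) (v x)) μ := by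
    intro w v hv
    have hw : AEMeasurable (fun x => (w : Ω → EuclideanSpace ℝ (Fin d)) x) μ :=
      (Lp.aestronglyMeasurable w).aemeasurable
    exact ((hgνcomp (hinner_meas hw)).mul (hinner_meas hv)).add
      ((hgτcomp (hinner_meas hw)).mul (hjτcomp hv))
  -- integrability of the integrand
  have hnormint : ∀ (v : Lp (EuclideanSpace ℝ (Fin d)) 2 μ),
      Integrable (fun x => ‖v x‖) μ := fun v =>
    ((Lp.memLp v).integrable one_le_two).norm
  have heint : Integrable (fun x => ‖e x‖) μ := (he.integrable one_le_two).norm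
  have hIntv : ∀ (w v : Lp (EuclideanSpace ℝ (Fin d)) 2 μ),
      Integrable (fun x => jfun ν gν gτ jτ x (w x) (v x)) μ := by
    intro w v
    have hmeas := (hmjfun w (Lp.aestronglyMeasurable v).aemeasurable).aestronglyMeasurable
    have hbint : Integrable (fun x =>
        gbarν * ‖v x‖ + gbarτ * (|jτ x (e x)| + cτ * (‖v x‖ + ‖e x‖))) μ :=
      ((hnormint v).const_mul gbarν).add
        (((hjτe.abs.add (((hnormint v).add heint).const_mul cτ)).const_mul gbarτ))
    refine hbint.mono' hmeas ?_
    filter_upwards [hνunit, hgνbd, hgτbd, hjτlip] with x h1 h2 h3 h4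
    rw [Real.norm_eq_abs]
    simp only [jfun]
    have hi1 : |(inner ℝ (v x) (ν x) : ℝ)| ≤ ‖v x‖ := by
      calc |(inner ℝ (v x) (ν x) : ℝ)| ≤ ‖v x‖ * ‖ν x‖ := abs_real_inner_le_norm _ _
        _ = ‖v x‖ := by rw [h1, mul_one]
    have hp1 : ‖v x - (inner ℝ (v x) (ν x) : ℝ) • ν x‖ ≤ ‖v x‖ := norm_proj_le h1 (v x)
    have hj1 : |jτ x (v x - (inner ℝ (v x) (ν x) : ℝ) • ν x)|
        ≤ |jτ x (e x)| + cτ * (‖v x‖ + ‖e x‖) := by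
      have h5 := h4 (v x - (inner ℝ (v x) (ν x) : ℝ) • ν x) (e x)
      have h6 : ‖(v x - (inner ℝ (v x) (ν x) : ℝ) • ν x) - e x‖
          ≤ ‖v x - (inner ℝ (v x) (ν x) : ℝ) • ν x‖ + ‖e x‖ := norm_sub_le _ _
      have h7 : cτ * ‖(v x - (inner ℝ (v x) (ν x) : ℝ) • ν x) - e x‖ ≤ cτ * (‖v x‖ + ‖e x‖) :=
        mul_le_mul_of_nonneg_left (h6.trans (by linarith)) hcτ.le
      calc |jτ x (v x - (inner ℝ (v x) (ν x) : ℝ) • ν x)|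
          ≤ |jτ x (v x - (inner ℝ (v x) (ν x) : ℝ) • ν x) - jτ x (e x)| + |jτ x (e x)| := by
            have := abs_sub_abs_le_abs_sub (jτ x (v x - (inner ℝ (v x) (ν x) : ℝ) • ν x))
              (jτ x (e x))
            have h8 := abs_add_le (jτ x (v x - (inner ℝ (v x) (ν x) : ℝ) • ν x) - jτ x (e x))
              (jτ x (e x))
            calc |jτ x (v x - (inner ℝ (v x) (ν x) : ℝ) • ν x)|
                = |(jτ x (v x - (inner ℝ (v x) (ν x) : ℝ) • ν x) - jτ x (e x)) + jτ x (e x)| := by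
                  ring_nf
              _ ≤ _ := h8
        _ ≤ |jτ x (e x)| + cτ * (‖v x‖ + ‖e x‖) := by linarith [h5.trans h7]
    have hgν0 := (h2 (inner ℝ (w x) (ν x) : ℝ)).1
    have hgν1 := (h2 (inner ℝ (w x) (ν x) : ℝ)).2
    have hgτ0 := (h3 (inner ℝ (w x) (ν x) : ℝ)).1
    have hgτ1 := (h3 (inner ℝ (w x) (ν x) : ℝ)).2
    calc |gν x (inner ℝ (w x) (ν x) : ℝ) * (inner ℝ (v x) (ν x) : ℝ)
          + gτ x (inner ℝ (w x) (ν x) : ℝ) * jτ x (v x - (inner ℝ (v x) (ν x) : ℝ) • ν x)|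
        ≤ |gν x (inner ℝ (w x) (ν x) : ℝ)| * |(inner ℝ (v x) (ν x) : ℝ)|
          + |gτ x (inner ℝ (w x) (ν x) : ℝ)|
            * |jτ x (v x - (inner ℝ (v x) (ν x) : ℝ) • ν x)| := by
          rw [← abs_mul, ← abs_mul]; exact abs_add_le _ _
      _ ≤ gbarν * ‖v x‖ + gbarτ * (|jτ x (e x)| + cτ * (‖v x‖ + ‖e x‖)) := by
          rw [abs_of_nonneg hgν0, abs_of_nonneg hgτ0]
          have t1 : gν x (inner ℝ (w x) (ν x) : ℝ) * |(inner ℝ (v x) (ν x) : ℝ)| ≤ gbarν * ‖v x‖ :=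
            mul_le_mul hgν1 hi1 (abs_nonneg _) (hgν0.trans hgν1)
          have t2 : gτ x (inner ℝ (w x) (ν x) : ℝ)
              * |jτ x (v x - (inner ℝ (v x) (ν x) : ℝ) • ν x)|
              ≤ gbarτ * (|jτ x (e x)| + cτ * (‖v x‖ + ‖e x‖)) :=
            mul_le_mul hgτ1 hj1 (abs_nonneg _) (hgτ0.trans hgτ1)
          linarith
  -- quotient formula
  have hcoe : ∀ (u ζ : Lp (EuclideanSpace ℝ (Fin d)) 2 μ) (l : ℝ),
      ∀ᵐ x ∂μ, ((u + l • ζ : Lp (EuclideanSpace ℝ (Fin d)) 2 μ) : Ω → EuclideanSpace ℝ (Fin d)) x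
        = u x + l • ζ x := by
    intro u ζ l
    filter_upwards [Lp.coeFn_add u (l • ζ), Lp.coeFn_smul l ζ] with x h1 h2
    rw [h1]
    simp only [Pi.add_apply]
    rw [h2]
    simp
  have hIq : ∀ (w u ζ : Lp (EuclideanSpace ℝ (Fin d)) 2 μ) (l : ℝ),
      Integrable (fun x => jfun ν gν gτ jτ x (w x) (u x + l • ζ x)) μ := by
    intro w u ζ l
    refine (hIntv w (u + l • ζ)).congr ?_
    filter_upwards [hcoe u ζ l] with x hx
    rw [hx]
  have hquot : ∀ (w u ζ : Lp (EuclideanSpace ℝ (Fin d)) 2 μ) {l : ℝ}, l ≠ 0 →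
      (Jfun μ ν gν gτ jτ w (u + l • ζ) - Jfun μ ν gν gτ jτ w u) / l
      = ∫ x, (jfun ν gν gτ jτ x (w x) (u x + l • ζ x)
          - jfun ν gν gτ jτ x (w x) (u x)) / l ∂μ := by
    intro w u ζ l hl
    have h1 : Jfun μ ν gν gτ jτ w (u + l • ζ)
        = ∫ x, jfun ν gν gτ jτ x (w x) (u x + l • ζ x) ∂μ := by
      simp only [Jfun]
      refine integral_congr_ae ?_
      filter_upwards [hcoe u ζ l] with x hx
      rw [hx]
    simp only [Jfun] at *
    rw [h1, ← integral_sub (hIq w u ζ l) (hIntv w u), ← integral_div]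
  have hQint : ∀ (w u ζ : Lp (EuclideanSpace ℝ (Fin d)) 2 μ) (l : ℝ),
      Integrable (fun x => (jfun ν gν gτ jτ x (w x) (u x + l • ζ x)
        - jfun ν gν gτ jτ x (w x) (u x)) / l) μ := fun w u ζ l =>
    ((hIq w u ζ l).sub (hIntv w u)).div_const l
  -- uniform bound on difference quotients
  have hQptbd : ∀ (w u ζ : Lp (EuclideanSpace ℝ (Fin d)) 2 μ) {l : ℝ}, 0 < l →
      ∀ᵐ x ∂μ, |(jfun ν gν gτ jτ x (w x) (u x + l • ζ x)
        - jfun ν gν gτ jτ x (w x) (u x)) / l| ≤ (gbarν + gbarτ * cτ) * ‖ζ x‖ := by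
    intro w u ζ l hl
    filter_upwards [hνunit, hgνbd, hgτbd, hjτlip] with x h1 h2 h3 h4
    simpa only [jfun] using jfun_quot_abs_le (gν x) (gτ x) (jτ x) (ν x) h1 h2 h3 h4 hcτ.le
      (w x) (u x) (ζ x) hl
  have hFbd : ∀ (w u ζ : Lp (EuclideanSpace ℝ (Fin d)) 2 μ) {l : ℝ}, 0 < l →
      |(Jfun μ ν gν gτ jτ w (u + l • ζ) - Jfun μ ν gν gτ jτ w u) / l|
      ≤ (gbarν + gbarτ * cτ) * ∫ x, ‖ζ x‖ ∂μ := by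
    intro w u ζ l hl
    rw [hquot w u ζ hl.ne', ← Real.norm_eq_abs]
    rw [← integral_const_mul]
    refine norm_integral_le_of_norm_le ((hnormint ζ).const_mul _) ?_
    filter_upwards [hQptbd w u ζ hl] with x hx
    rwa [Real.norm_eq_abs]
  -- the difference quotient functionals
  set F₁ : Lp (EuclideanSpace ℝ (Fin d)) 2 μ × ℝ → ℝ := fun p =>
    (Jfun μ ν gν gτ jτ w₁ (p.1 + p.2 • z) - Jfun μ ν gν gτ jτ w₁ p.1) / p.2 with hF₁def
  set F₂ : Lp (EuclideanSpace ℝ (Fin d)) 2 μ × ℝ → ℝ := fun p =>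
    (Jfun μ ν gν gτ jτ w₂ (p.1 + p.2 • z') - Jfun μ ν gν gτ jτ w₂ p.1) / p.2 with hF₂def
  set 𝓕₁ : Filter (Lp (EuclideanSpace ℝ (Fin d)) 2 μ × ℝ) :=
    (nhds v₁) ×ˢ (nhdsWithin 0 (Set.Ioi 0)) with h𝓕₁def
  set 𝓕₂ : Filter (Lp (EuclideanSpace ℝ (Fin d)) 2 μ × ℝ) :=
    (nhds v₂) ×ˢ (nhdsWithin 0 (Set.Ioi 0)) with h𝓕₂def
  have hD₁eq : clarkeDeriv (Jfun μ ν gν gτ jτ w₁) v₁ z = limsup F₁ 𝓕₁ := rfl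
  have hD₂eq : clarkeDeriv (Jfun μ ν gν gτ jτ w₂) v₂ z' = limsup F₂ 𝓕₂ := rfl
  set D₁ : ℝ := clarkeDeriv (Jfun μ ν gν gτ jτ w₁) v₁ z with hD₁def
  set D₂ : ℝ := clarkeDeriv (Jfun μ ν gν gτ jτ w₂) v₂ z' with hD₂def
  set C : ℝ := gbarν + gbarτ * cτ with hCdef
  have hF₁ev : ∀ᶠ p in 𝓕₁, |F₁ p| ≤ C * ∫ x, ‖z x‖ ∂μ :=
    eventually_pos_clarke.mono fun p hp => hFbd w₁ p.1 z hp
  have hF₂ev : ∀ᶠ p in 𝓕₂, |F₂ p| ≤ C * ∫ x, ‖z' x‖ ∂μ :=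
    eventually_pos_clarke.mono fun p hp => hFbd w₂ p.1 z' hp
  by_contra hcon
  push_neg at hcon
  set Rtot : ℝ := gbarτ * ατ * ‖z'‖ ^ 2 + (Lgν + Lgτ * cτ) * ‖W‖ * ‖z'‖ with hRdef
  have hcon' : Rtot < D₁ + D₂ := hcon
  set ε : ℝ := (D₁ + D₂ - Rtot) / 3 with hεdef
  have hε : 0 < ε := by simp only [hεdef]; linarith
  have hfreq₁ : ∃ᶠ p in 𝓕₁, D₁ - ε < F₁ p := by
    refine frequently_lt_of_lt_limsup (Filter.isCoboundedUnder_le_of_eventually_le _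
      (x := -(C * ∫ x, ‖z x‖ ∂μ)) (hF₁ev.mono fun p hp => neg_le_of_abs_le hp)) ?_
    rw [← hD₁eq]
    linarith
  have hfreq₂ : ∃ᶠ p in 𝓕₂, D₂ - ε < F₂ p := by
    refine frequently_lt_of_lt_limsup (Filter.isCoboundedUnder_le_of_eventually_le _
      (x := -(C * ∫ x, ‖z' x‖ ∂μ)) (hF₂ev.mono fun p hp => neg_le_of_abs_le hp)) ?_
    rw [← hD₂eq]
    linarith
  obtain ⟨s₁, hs₁t, hs₁v⟩ := Filter.exists_seq_forall_of_frequently hfreq₁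
  obtain ⟨s₂, hs₂t, hs₂v⟩ := Filter.exists_seq_forall_of_frequently hfreq₂
  obtain ⟨N₁, hN₁⟩ := Filter.eventually_atTop.1 (hs₁t.eventually eventually_pos_clarke)
  obtain ⟨N₂, hN₂⟩ := Filter.eventually_atTop.1 (hs₂t.eventually eventually_pos_clarke)
  set M : ℕ := max N₁ N₂ with hMdef
  set t₁ : ℕ → Lp (EuclideanSpace ℝ (Fin d)) 2 μ × ℝ := fun n => s₁ (n + M) with ht₁def
  set t₂ : ℕ → Lp (EuclideanSpace ℝ (Fin d)) 2 μ × ℝ := fun n => s₂ (n + M) with ht₂def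
  have ht₁ : Tendsto t₁ atTop 𝓕₁ := hs₁t.comp (tendsto_add_atTop_nat M)
  have ht₂ : Tendsto t₂ atTop 𝓕₂ := hs₂t.comp (tendsto_add_atTop_nat M)
  have ht₁pos : ∀ n, 0 < (t₁ n).2 := fun n =>
    hN₁ _ ((le_max_left N₁ N₂).trans (Nat.le_add_left M n))
  have ht₂pos : ∀ n, 0 < (t₂ n).2 := fun n =>
    hN₂ _ ((le_max_right N₁ N₂).trans (Nat.le_add_left M n))
  have ht₁v : ∀ n, D₁ - ε < F₁ (t₁ n) := fun n => hs₁v _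
  have ht₂v : ∀ n, D₂ - ε < F₂ (t₂ n) := fun n => hs₂v _
  -- extract a.e. convergent subsequences
  have hkey : ∀ (u v : Lp (EuclideanSpace ℝ (Fin d)) 2 μ),
      eLpNorm ((u : Ω → EuclideanSpace ℝ (Fin d)) - (v : Ω → EuclideanSpace ℝ (Fin d))) 2 μ
        = ENNReal.ofReal ‖u - v‖ := by
    intro u v
    rw [eLpNorm_congr_ae (Lp.coeFn_sub u v).symm, Lp.norm_def,
      ENNReal.ofReal_toReal (Lp.eLpNorm_ne_top _)]
  have hsubmeas : ∀ (v : Lp (EuclideanSpace ℝ (Fin d)) 2 μ)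
      (s : ℕ → Lp (EuclideanSpace ℝ (Fin d)) 2 μ), Tendsto s atTop (nhds v) →
      TendstoInMeasure μ (fun n => (s n : Ω → EuclideanSpace ℝ (Fin d))) atTop
        (v : Ω → EuclideanSpace ℝ (Fin d)) := by
    intro v s hs
    refine tendstoInMeasure_of_tendsto_eLpNorm (p := 2) (by norm_num)
      (fun n => Lp.aestronglyMeasurable _) (Lp.aestronglyMeasurable v) ?_
    have heq : (fun n => eLpNorm ((s n : Ω → EuclideanSpace ℝ (Fin d))
        - (v : Ω → EuclideanSpace ℝ (Fin d))) 2 μ) = fun n => ENNReal.ofReal ‖s n - v‖ :=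
      funext fun n => hkey _ _
    rw [heq]
    have hnorm : Tendsto (fun n => ‖s n - v‖) atTop (nhds 0) :=
      tendsto_iff_norm_sub_tendsto_zero.1 hs
    simpa using ENNReal.tendsto_ofReal hnorm
  obtain ⟨ns₁, hns₁mono, hns₁ae⟩ :=
    (hsubmeas v₁ (fun n => (t₁ n).1) (tendsto_fst.comp ht₁)).exists_seq_tendsto_ae
  obtain ⟨ns₂, hns₂mono, hns₂ae⟩ :=
    (hsubmeas v₂ (fun k => (t₂ (ns₁ k)).1)
      ((tendsto_fst.comp ht₂).comp hns₁mono.tendsto_atTop)).exists_seq_tendsto_ae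
  set pp : ℕ → Lp (EuclideanSpace ℝ (Fin d)) 2 μ × ℝ := fun n => t₁ (ns₁ (ns₂ n)) with hppdef
  set qq : ℕ → Lp (EuclideanSpace ℝ (Fin d)) 2 μ × ℝ := fun n => t₂ (ns₁ (ns₂ n)) with hqqdef
  have hpae : ∀ᵐ x ∂μ, Tendsto (fun n => ((pp n).1 : Ω → EuclideanSpace ℝ (Fin d)) x) atTop
      (nhds ((v₁ : Ω → EuclideanSpace ℝ (Fin d)) x)) :=
    hns₁ae.mono fun x hx => hx.comp hns₂mono.tendsto_atTop
  have hqae : ∀ᵐ x ∂μ, Tendsto (fun n => ((qq n).1 : Ω → EuclideanSpace ℝ (Fin d)) x) atTop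
      (nhds ((v₂ : Ω → EuclideanSpace ℝ (Fin d)) x)) := hns₂ae
  have hppos : ∀ n, 0 < (pp n).2 := fun n => ht₁pos _
  have hqpos : ∀ n, 0 < (qq n).2 := fun n => ht₂pos _
  have hpv : ∀ n, D₁ - ε < F₁ (pp n) := fun n => ht₁v _
  have hqv : ∀ n, D₂ - ε < F₂ (qq n) := fun n => ht₂v _
  have hmono12 : StrictMono (fun n => ns₁ (ns₂ n)) := hns₁mono.comp hns₂mono
  have hp2 : Tendsto (fun n => (pp n).2) atTop (nhds 0) :=
    ((tendsto_snd.comp ht₁).comp hmono12.tendsto_atTop).mono_right nhdsWithin_le_nhds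
  have hq2 : Tendsto (fun n => (qq n).2) atTop (nhds 0) :=
    ((tendsto_snd.comp ht₂).comp hmono12.tendsto_atTop).mono_right nhdsWithin_le_nhds
  -- the sequence of integrands for Fatou
  set fseq : ℕ → Ω → ℝ := fun n x =>
    (jfun ν gν gτ jτ x (w₁ x) ((pp n).1 x + (pp n).2 • z x)
      - jfun ν gν gτ jτ x (w₁ x) ((pp n).1 x)) / (pp n).2
    + (jfun ν gν gτ jτ x (w₂ x) ((qq n).1 x + (qq n).2 • z' x)
      - jfun ν gν gτ jτ x (w₂ x) ((qq n).1 x)) / (qq n).2 with hfseqdef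
  have hfseqint : ∀ n, Integrable (fseq n) μ := fun n =>
    (hQint w₁ (pp n).1 z (pp n).2).add (hQint w₂ (qq n).1 z' (qq n).2)
  have hfint : ∀ n, ∫ x, fseq n x ∂μ = F₁ (pp n) + F₂ (qq n) := by
    intro n
    have e₁ : F₁ (pp n) = ∫ x, (jfun ν gν gτ jτ x (w₁ x) ((pp n).1 x + (pp n).2 • z x)
        - jfun ν gν gτ jτ x (w₁ x) ((pp n).1 x)) / (pp n).2 ∂μ :=
      hquot w₁ (pp n).1 z (hppos n).ne'
    have e₂ : F₂ (qq n) = ∫ x, (jfun ν gν gτ jτ x (w₂ x) ((qq n).1 x + (qq n).2 • z' x)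
        - jfun ν gν gτ jτ x (w₂ x) ((qq n).1 x)) / (qq n).2 ∂μ :=
      hquot w₂ (qq n).1 z' (hqpos n).ne'
    rw [e₁, e₂]
    exact integral_add (hQint w₁ (pp n).1 z (pp n).2) (hQint w₂ (qq n).1 z' (qq n).2)
  have hmf : ∀ n, AEStronglyMeasurable (fseq n) μ := fun n => (hfseqint n).1
  set bnd : Ω → ℝ := fun x => C * (‖z x‖ + ‖z' x‖) with hbnddef
  have hbndint : Integrable bnd μ := ((hnormint z).add (hnormint z')).const_mul C
  have hfb : ∀ n, ∀ᵐ x ∂μ, |fseq n x| ≤ bnd x := by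
    intro n
    filter_upwards [hQptbd w₁ (pp n).1 z (hppos n), hQptbd w₂ (qq n).1 z' (hqpos n)]
      with x hx1 hx2
    simp only [hfseqdef, hbnddef]
    calc |(jfun ν gν gτ jτ x (w₁ x) ((pp n).1 x + (pp n).2 • z x)
          - jfun ν gν gτ jτ x (w₁ x) ((pp n).1 x)) / (pp n).2
        + (jfun ν gν gτ jτ x (w₂ x) ((qq n).1 x + (qq n).2 • z' x)
          - jfun ν gν gτ jτ x (w₂ x) ((qq n).1 x)) / (qq n).2|
        ≤ |(jfun ν gν gτ jτ x (w₁ x) ((pp n).1 x + (pp n).2 • z x)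
          - jfun ν gν gτ jτ x (w₁ x) ((pp n).1 x)) / (pp n).2|
        + |(jfun ν gν gτ jτ x (w₂ x) ((qq n).1 x + (qq n).2 • z' x)
          - jfun ν gν gτ jτ x (w₂ x) ((qq n).1 x)) / (qq n).2| := abs_add_le _ _
      _ ≤ C * ‖z x‖ + C * ‖z' x‖ := add_le_add hx1 hx2
      _ = C * (‖z x‖ + ‖z' x‖) := by ring
  set hfn : Ω → ℝ := fun x =>
    gbarτ * ατ * ‖z x‖ ^ 2 + (Lgν + Lgτ * cτ) * (‖W x‖ * ‖z x‖) with hhfndef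
  have hfnint : Integrable hfn μ :=
    ((integrable_norm_sq z).const_mul _).add ((integrable_norm_mul_norm W z).const_mul _)
  -- coercion identities
  have hzc : ∀ᵐ x ∂μ, (z : Ω → EuclideanSpace ℝ (Fin d)) x = v₂ x - v₁ x := by
    rw [hzdef]
    filter_upwards [Lp.coeFn_sub v₂ v₁] with x hx
    rw [hx]; rfl
  have hz'c : ∀ᵐ x ∂μ, (z' : Ω → EuclideanSpace ℝ (Fin d)) x = v₁ x - v₂ x := by
    rw [hz'def]
    filter_upwards [Lp.coeFn_sub v₁ v₂] with x hx
    rw [hx]; rfl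
  have hWc : ∀ᵐ x ∂μ, (W : Ω → EuclideanSpace ℝ (Fin d)) x = w₁ x - w₂ x := by
    rw [hWdef]
    filter_upwards [Lp.coeFn_sub w₁ w₂] with x hx
    rw [hx]; rfl
  -- the pointwise limsup bound
  have hptlim : ∀ᵐ x ∂μ, limsup (fun n => fseq n x) atTop ≤ hfn x := by
    filter_upwards [hνunit, hgνbd, hgτbd, hgνlip, hgτlip, hjτlip, hjτmon, hpae, hqae,
      hzc, hz'c, hWc] with x hν1 hgb hgt hlν hlτ hjl hmonx hpx hqx hzcx hz'cx hWcx
    have hfx : (fun n => fseq n x) = fun n =>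
        (gν x (inner ℝ (w₁ x) (ν x) : ℝ) * (inner ℝ (v₂ x - v₁ x) (ν x) : ℝ)
          + gτ x (inner ℝ (w₁ x) (ν x) : ℝ) *
            ((jτ x (((pp n).1 x - (inner ℝ ((pp n).1 x) (ν x) : ℝ) • ν x)
              + (pp n).2 • ((v₂ x - v₁ x) - (inner ℝ (v₂ x - v₁ x) (ν x) : ℝ) • ν x))
              - jτ x ((pp n).1 x - (inner ℝ ((pp n).1 x) (ν x) : ℝ) • ν x)) / (pp n).2))
        + (gν x (inner ℝ (w₂ x) (ν x) : ℝ) * (inner ℝ (v₁ x - v₂ x) (ν x) : ℝ)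
          + gτ x (inner ℝ (w₂ x) (ν x) : ℝ) *
            ((jτ x (((qq n).1 x - (inner ℝ ((qq n).1 x) (ν x) : ℝ) • ν x)
              + (qq n).2 • ((v₁ x - v₂ x) - (inner ℝ (v₁ x - v₂ x) (ν x) : ℝ) • ν x))
              - jτ x ((qq n).1 x - (inner ℝ ((qq n).1 x) (ν x) : ℝ) • ν x)) / (qq n).2)) := by
      funext n
      simp only [hfseqdef, jfun]
      rw [jfun_quot_eq (gν x) (gτ x) (jτ x) (ν x) (w₁ x) ((pp n).1 x)
          ((z : Ω → EuclideanSpace ℝ (Fin d)) x) (hppos n).ne',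
        jfun_quot_eq (gν x) (gτ x) (jτ x) (ν x) (w₂ x) ((qq n).1 x)
          ((z' : Ω → EuclideanSpace ℝ (Fin d)) x) (hqpos n).ne', hzcx, hz'cx]
    rw [hfx]
    have hgoal : hfn x = gbarτ * ατ * ‖v₂ x - v₁ x‖ ^ 2
        + (Lgν + Lgτ * cτ) * (‖w₁ x - w₂ x‖ * ‖v₂ x - v₁ x‖) := by
      simp only [hhfndef]
      rw [hzcx, hWcx]
    rw [hgoal]
    have ha : |gν x (inner ℝ (w₁ x) (ν x) : ℝ) - gν x (inner ℝ (w₂ x) (ν x) : ℝ)|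
        ≤ Lgν * ‖w₁ x - w₂ x‖ := by
      refine (hlν _ _).trans ?_
      refine mul_le_mul_of_nonneg_left ?_ hLgν.le
      rw [← inner_sub_left]
      calc |(inner ℝ (w₁ x - w₂ x) (ν x) : ℝ)| ≤ ‖w₁ x - w₂ x‖ * ‖ν x‖ :=
            abs_real_inner_le_norm _ _
        _ = ‖w₁ x - w₂ x‖ := by rw [hν1, mul_one]
    have hb : |gτ x (inner ℝ (w₂ x) (ν x) : ℝ) - gτ x (inner ℝ (w₁ x) (ν x) : ℝ)|
        ≤ Lgτ * ‖w₁ x - w₂ x‖ := by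
      refine (hlτ _ _).trans ?_
      refine mul_le_mul_of_nonneg_left ?_ hLgτ.le
      rw [← inner_sub_left]
      calc |(inner ℝ (w₂ x - w₁ x) (ν x) : ℝ)| ≤ ‖w₂ x - w₁ x‖ * ‖ν x‖ :=
            abs_real_inner_le_norm _ _
        _ = ‖w₁ x - w₂ x‖ := by rw [hν1, mul_one, norm_sub_rev]
    exact core_limsup_bound (jτ x) (ν x) hν1 hcτ.le hατ hLgν.le hLgτ.le hjl (v₁ x) (v₂ x)
      (hmonx (v₁ x - (inner ℝ (v₁ x) (ν x) : ℝ) • ν x)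
        (v₂ x - (inner ℝ (v₂ x) (ν x) : ℝ) • ν x))
      ha hb (hgt _).1 (hgt _).2 (hgt _).1 (hgt _).2 hpx hqx hp2 hq2 hppos hqpos
  -- Fatou
  have hls : limsup (fun n => ∫ x, fseq n x ∂μ) atTop ≤ ∫ x, hfn x ∂μ :=
    limsup_integral_le_of_ae hmf hbndint hfnint hfb hptlim
  -- lower bound on the integrals
  have hlow : ∀ n, Rtot + ε ≤ ∫ x, fseq n x ∂μ := by
    intro n
    rw [hfint n]
    have h1 := hpv n
    have h2 := hqv n
    have hε3 : ε = (D₁ + D₂ - Rtot) / 3 := hεdef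
    linarith
  have hIb : ∀ n, ∫ x, fseq n x ∂μ ≤ ∫ x, bnd x ∂μ := fun n =>
    integral_mono_ae (hfseqint n) hbndint ((hfb n).mono fun x hx => le_of_abs_le hx)
  have hup : Rtot + ε ≤ limsup (fun n => ∫ x, fseq n x ∂μ) atTop := by
    refine le_limsup_of_frequently_le (Filter.Frequently.of_forall hlow) ?_
    exact Filter.isBoundedUnder_of ⟨∫ x, bnd x ∂μ, fun n => hIb n⟩
  -- integral of the pointwise bound
  have hnormzz' : ‖z‖ = ‖z'‖ := by rw [hzdef, hz'def]; exact norm_sub_rev _ _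
  have hRint : ∫ x, hfn x ∂μ ≤ Rtot := by
    have h1 : ∫ x, hfn x ∂μ = gbarτ * ατ * (∫ x, ‖z x‖ ^ 2 ∂μ)
        + (Lgν + Lgτ * cτ) * ∫ x, ‖W x‖ * ‖z x‖ ∂μ := by
      simp only [hhfndef]
      rw [integral_add ((integrable_norm_sq z).const_mul _)
        ((integrable_norm_mul_norm W z).const_mul _), integral_const_mul, integral_const_mul]
    rw [h1, integral_norm_sq_eq z]
    have h2 := integral_norm_mul_norm_le W z
    have hc2 : (0:ℝ) ≤ Lgν + Lgτ * cτ := by positivity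
    have hgat : (0:ℝ) ≤ gbarτ * ατ := mul_nonneg hgbarτ.le hατ
    have h3 : gbarτ * ατ * ‖z‖ ^ 2 = gbarτ * ατ * ‖z'‖ ^ 2 := by rw [hnormzz']
    have h4 : (Lgν + Lgτ * cτ) * ∫ x, ‖W x‖ * ‖z x‖ ∂μ
        ≤ (Lgν + Lgτ * cτ) * (‖W‖ * ‖z'‖) := by
      rw [← hnormzz']
      exact mul_le_mul_of_nonneg_left h2 hc2
    rw [hRdef]
    nlinarith
  linarith [hup.trans (hls.trans hRint), hε]
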